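/- The Integrated Gradients method satisfies proportionality: if F : [a,b] → ℝ has the form F(x) = G(∑_{j=1}^n x_j) for a continuously differentiable G : ℝ → ℝ, and 0 ∈ [a,b], then for every x̄ ∈ [a,b] and every i, IG_i(x̄, 0, F) = c·x̄_i where c = ∫₀¹ G'(t·∑_j x̄_j) dt; in particular each attribution is proportional to x̄_i. -/

import Mathlib

open MeasureTheory

/-- The partial derivative of `F : ℝⁿ → ℝ` in the `i`-th coordinate at `x`. -/
noncomputable def pderiv' {n : ℕ} (F : (Fin n → ℝ) → ℝ) (i : Fin n) (x : Fin n → ℝ) : ℝ :=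
  deriv (fun t => F (Function.update x i t)) (x i)

/-- The Integrated Gradients attribution:
`IG_i(x̄, x', F) = (x̄_i − x'_i) ∫₀¹ (∂F/∂x_i)(x' + t(x̄ − x')) dt`. -/
noncomputable def IG {n : ℕ} (xbar x' : Fin n → ℝ) (F : (Fin n → ℝ) → ℝ) : Fin n → ℝ :=
  fun i => (xbar i - x' i) * ∫ t in (0:ℝ)..1, pderiv' F i (x' + t • (xbar - x'))

lemma pderiv'_sum {n : ℕ} (G : ℝ → ℝ) (hG : ContDiff ℝ 1 G)
    (F : (Fin n → ℝ) → ℝ) (hF : ∀ x, F x = G (∑ j, x j)) (i : Fin n) (x : Fin n → ℝ) :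
    pderiv' F i x = deriv G (∑ j, x j) := by
  have hC : ∀ s : ℝ, ∑ j, Function.update x i s j
      = s + ∑ j ∈ Finset.univ.erase i, x j := by
    intro s
    rw [Finset.sum_update_of_mem (Finset.mem_univ i)]
    congr 1
    · exact Finset.sum_congr (by rw [Finset.sdiff_singleton_eq_erase]) fun j hj => rfl
  have hx : ∑ j, x j = x i + ∑ j ∈ Finset.univ.erase i, x j :=
    (Finset.add_sum_erase _ _ (Finset.mem_univ i)).symm
  have hd : HasDerivAt (fun s => F (Function.update x i s)) (deriv G (∑ j, x j)) (x i) := by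
    have h1 : HasDerivAt (fun s : ℝ => s + ∑ j ∈ Finset.univ.erase i, x j) 1 (x i) :=
      (hasDerivAt_id (x i)).add_const _
    have h2 : HasDerivAt G (deriv G (∑ j, x j)) (x i + ∑ j ∈ Finset.univ.erase i, x j) := by
      rw [← hx]
      exact (hG.differentiable one_ne_zero (∑ j, x j)).hasDerivAt
    have := (h2.comp (x i) h1)
    simpa [hF, hC, mul_one, Function.comp_def] using this
  rw [pderiv']
  exact hd.deriv

theorem IG_proportionality {n : ℕ} (a b : Fin n → ℝ)
    (G : ℝ → ℝ) (hG : ContDiff ℝ 1 G)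
    (F : (Fin n → ℝ) → ℝ) (hF : ∀ x, F x = G (∑ j, x j))
    (h0 : (0 : Fin n → ℝ) ∈ Set.uIcc a b)
    (xbar : Fin n → ℝ) (hxbar : xbar ∈ Set.uIcc a b) (i : Fin n) :
    IG xbar 0 F i = (∫ t in (0:ℝ)..1, deriv G (t * ∑ j, xbar j)) * xbar i := by
  have key : ∀ t : ℝ, pderiv' F i (t • xbar)
      = deriv G (t * ∑ j, xbar j) := by
    intro t
    rw [pderiv'_sum G hG F hF]
    congr 1
    simp [Finset.mul_sum]
  simp only [IG, sub_zero, zero_add, Pi.zero_apply, key]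
  ring
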